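/- arXiv:2306.09099 — 5 statements merged into one kernel-verified Lean document; each statement's English description precedes it below -/
import Mathlib

section
/- Let d ≥ 1, let b : ℝ^d → ℝ^d and k : ℝ^d → ℝ be continuous with k(x) ≥ 0 for all x, and let U ⊆ ℝ^d be open. Let f be twice continuously differentiable on an open set containing the closure of U. Assume that 𝒜f(x) > 0 for every x ∈ U, and that there exists x₀ in the closure of U with f(x₀) = sup{ f(x) : x ∈ closure of U } and f(x₀) ≥ 0. Then x₀ lies on the topological boundary of U; in particular x₀ ∉ U. -/
open MeasureTheory

noncomputable section

open Filter Topology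

lemma second_deriv_nonpos_of_isLocalMax {g g1 : ℝ → ℝ} {c : ℝ}
    (hmax : IsLocalMax g 0)
    (hg : ∀ᶠ t in 𝓝 (0:ℝ), HasDerivAt g (g1 t) t)
    (hg1 : HasDerivAt g1 c 0) : c ≤ 0 := by
  by_contra hc
  push_neg at hc
  have h0 : g1 0 = 0 := hmax.hasDerivAt_eq_zero hg.self_of_nhds
  have hslope : Tendsto (slope g1 0) (𝓝[≠] (0:ℝ)) (𝓝 c) :=
    hasDerivAt_iff_tendsto_slope.mp hg1
  have hpos : ∀ᶠ t in 𝓝[≠] (0:ℝ), 0 < slope g1 0 t :=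
    hslope.eventually (eventually_gt_nhds hc)
  rw [eventually_nhdsWithin_iff] at hpos
  have hev : ∀ᶠ t in 𝓝 (0:ℝ),
      (HasDerivAt g (g1 t) t ∧ g t ≤ g 0) ∧ (t ≠ 0 → 0 < g1 t / t) := by
    filter_upwards [hg, hmax, hpos] with t h1 h2 h3
    refine ⟨⟨h1, h2⟩, fun ht => ?_⟩
    have := h3 ht
    rw [div_eq_inv_mul]; simpa [slope, h0] using this
  obtain ⟨ε, εpos, hε⟩ := Metric.eventually_nhds_iff.mp hev
  set t0 : ℝ := ε / 2 with ht0
  have ht0pos : 0 < t0 := by positivity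
  have ht0ε : t0 < ε := by simp [ht0]; linarith
  have key : ∀ t ∈ Set.Icc (0:ℝ) t0, HasDerivAt g (g1 t) t ∧ g t ≤ g 0 ∧ (t ≠ 0 → 0 < g1 t) := by
    intro t ht
    have hd : dist t (0:ℝ) < ε := by
      rw [Real.dist_eq, sub_zero, abs_of_nonneg ht.1]
      exact lt_of_le_of_lt ht.2 ht0ε
    obtain ⟨⟨h1, h2⟩, h3⟩ := hε hd
    refine ⟨h1, h2, fun htne => ?_⟩
    have htpos : 0 < t := lt_of_le_of_ne ht.1 (Ne.symm htne)
    have := h3 htne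
    exact (div_pos_iff.mp this).resolve_right (by intro h; linarith [h.2]) |>.1
  have hmono : StrictMonoOn g (Set.Icc (0:ℝ) t0) := by
    apply strictMonoOn_of_deriv_pos (convex_Icc 0 t0)
    · intro t ht
      exact ((key t ht).1.differentiableAt.continuousAt).continuousWithinAt
    · intro t ht
      rw [interior_Icc] at ht
      have ht' : t ∈ Set.Icc (0:ℝ) t0 := Set.Ioo_subset_Icc_self ht
      obtain ⟨h1, _, h3⟩ := key t ht'
      rw [h1.deriv]
      exact h3 (ne_of_gt ht.1)
  have : g 0 < g t0 := hmono (Set.left_mem_Icc.mpr ht0pos.le)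
    (Set.right_mem_Icc.mpr ht0pos.le) ht0pos
  have : g t0 ≤ g 0 := (key t0 (Set.right_mem_Icc.mpr ht0pos.le)).2.1
  linarith


/-- Laplacian of `f : ℝ^d → ℝ` at `x`, computed as the trace of the second derivative. -/
def lap {d : ℕ} (f : EuclideanSpace ℝ (Fin d) → ℝ) (x : EuclideanSpace ℝ (Fin d)) : ℝ :=
  ∑ i, fderiv ℝ (fderiv ℝ f) x (EuclideanSpace.single i 1) (EuclideanSpace.single i 1)

/-- The elliptic generator with killing:
`𝒜 f (x) = (1/2) Δf(x) + ⟨b(x), ∇f(x)⟩ − k(x) f(x)`. -/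
def gen {d : ℕ} (b : EuclideanSpace ℝ (Fin d) → EuclideanSpace ℝ (Fin d))
    (k : EuclideanSpace ℝ (Fin d) → ℝ) (f : EuclideanSpace ℝ (Fin d) → ℝ)
    (x : EuclideanSpace ℝ (Fin d)) : ℝ :=
  (1 / 2) * lap f x + (inner ℝ (b x) (gradient f x) : ℝ) - k x * f x

/-- **Weak maximum principle** for the generator of a diffusion with killing:
if `𝒜 f > 0` on an open set `U` and `f` attains its (nonnegative) supremum over the
closure of `U` at `x₀`, then `x₀` lies on the topological boundary of `U`;
in particular `x₀ ∉ U`. -/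
theorem weak_maximum_principle {d : ℕ} (hd : 1 ≤ d)
    (b : EuclideanSpace ℝ (Fin d) → EuclideanSpace ℝ (Fin d))
    (k : EuclideanSpace ℝ (Fin d) → ℝ)
    (hb : Continuous b) (hk : Continuous k) (hk0 : ∀ x, 0 ≤ k x)
    (U : Set (EuclideanSpace ℝ (Fin d))) (hU : IsOpen U)
    (V : Set (EuclideanSpace ℝ (Fin d))) (hV : IsOpen V) (hUV : closure U ⊆ V)
    (f : EuclideanSpace ℝ (Fin d) → ℝ) (hf : ContDiffOn ℝ 2 f V)
    (hA : ∀ x ∈ U, 0 < gen b k f x)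
    (x₀ : EuclideanSpace ℝ (Fin d)) (hx₀ : x₀ ∈ closure U)
    (hmax : ∀ x ∈ closure U, f x ≤ f x₀)
    (hnonneg : 0 ≤ f x₀) :
    x₀ ∈ frontier U ∧ x₀ ∉ U := by
  have hnotU : x₀ ∉ U := by
    intro hx₀U
    -- f is C² at points of V
    have hCD : ∀ y ∈ V, ContDiffAt ℝ 2 f y := fun y hy => hf.contDiffAt (hV.mem_nhds hy)
    have hx₀V : x₀ ∈ V := hUV hx₀
    -- local max of f at x₀
    have hlocmax : IsLocalMax f x₀ := by
      filter_upwards [hU.mem_nhds hx₀U] with x hx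
      exact hmax x (subset_closure hx)
    -- gradient vanishes
    have hfd0 : fderiv ℝ f x₀ = 0 := hlocmax.fderiv_eq_zero
    have hgrad0 : gradient f x₀ = 0 := by
      simp [gradient, hfd0]
    -- each diagonal second derivative is nonpositive
    have hsummand : ∀ i : Fin d,
        fderiv ℝ (fderiv ℝ f) x₀ (EuclideanSpace.single i 1) (EuclideanSpace.single i 1) ≤ 0 := by
      intro i
      set e : EuclideanSpace ℝ (Fin d) := EuclideanSpace.single i 1 with he
      set L : ℝ → EuclideanSpace ℝ (Fin d) := fun t => x₀ + t • e with hL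
      have hL0 : L 0 = x₀ := by simp [hL]
      have hLd : ∀ t : ℝ, HasDerivAt L e t := by
        intro t
        have : HasDerivAt (fun t : ℝ => t • e) ((1:ℝ) • e) t :=
          (hasDerivAt_id t).smul_const e
        simpa [hL, one_smul] using this.const_add x₀
      have hLc : Continuous L := by
        continuity
      have hLnhds : Tendsto L (𝓝 0) (𝓝 x₀) := by
        rw [← hL0]; exact hLc.continuousAt
      set g : ℝ → ℝ := fun t => f (L t) with hg
      set g1 : ℝ → ℝ := fun t => fderiv ℝ f (L t) e with hg1
      -- local max of g at 0
      have hgmax : IsLocalMax g 0 := by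
        have : ∀ᶠ x in 𝓝 x₀, f x ≤ f x₀ := hlocmax
        filter_upwards [hLnhds.eventually this] with t ht
        simpa [hg, hL0] using ht
      -- g has derivative g1 near 0
      have hgd : ∀ᶠ t in 𝓝 (0:ℝ), HasDerivAt g (g1 t) t := by
        filter_upwards [hLnhds.eventually (hV.eventually_mem hx₀V)] with t ht
        have hdf : HasFDerivAt f (fderiv ℝ f (L t)) (L t) :=
          ((hCD _ ht).differentiableAt two_ne_zero).hasFDerivAt
        exact hdf.comp_hasDerivAt t (hLd t)
      -- g1 has derivative c at 0
      have hF : HasFDerivAt (fderiv ℝ f) (fderiv ℝ (fderiv ℝ f) x₀) x₀ := by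
        have h1 : ContDiffAt ℝ 1 (fderiv ℝ f) x₀ :=
          (hCD _ hx₀V).fderiv_right (le_refl _)
        exact (h1.differentiableAt one_ne_zero).hasFDerivAt
      have hg1d : HasDerivAt g1 (fderiv ℝ (fderiv ℝ f) x₀ e e) 0 := by
        set ev : (EuclideanSpace ℝ (Fin d) →L[ℝ] ℝ) →L[ℝ] ℝ :=
          ContinuousLinearMap.apply ℝ ℝ e with hev
        have hcomp : HasFDerivAt (fun y => fderiv ℝ f y e)
            (ev.comp (fderiv ℝ (fderiv ℝ f) x₀)) x₀ := ev.hasFDerivAt.comp x₀ hF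
        rw [← hL0] at hcomp
        have := hcomp.comp_hasDerivAt 0 (hLd 0)
        simpa [hg1, hL0, Function.comp_def, hev] using this
      exact second_deriv_nonpos_of_isLocalMax hgmax hgd hg1d
    have hlap : lap f x₀ ≤ 0 :=
      Finset.sum_nonpos fun i _ => hsummand i
    have : gen b k f x₀ ≤ 0 := by
      have hkf : 0 ≤ k x₀ * f x₀ := mul_nonneg (hk0 x₀) hnonneg
      rw [gen, hgrad0]
      simp only [inner_zero_right]
      nlinarith
    linarith [hA x₀ hx₀U]
  refine ⟨?_, hnotU⟩
  rw [frontier, hU.interior_eq]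
  exact ⟨hx₀, hnotU⟩
end
end

section
/- Let d ≥ 1, let b : ℝ^d → ℝ^d and k : ℝ^d → ℝ with k(x) ≥ 0 for all x, let x* ∈ ℝ^d, let 0 < r ≤ R, and let C ≥ 0 satisfy ‖b(x)‖ + k(x) ≤ C for all x with ‖x − x*‖ ≤ R. For α > 0 define w_α(x) = exp(−α‖x − x*‖²/2) − exp(−α r²/2). Then there exists α₀ > 0 such that for every α ≥ α₀ and every x with r/2 ≤ ‖x − x*‖ ≤ R one has 𝒜w_α(x) > 0. -/
open MeasureTheory

noncomputable section

lemma aux_exp_deriv {d : ℕ} (α : ℝ) (xs x : EuclideanSpace ℝ (Fin d)) :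
    HasFDerivAt (fun y : EuclideanSpace ℝ (Fin d) => Real.exp (-α * ‖y - xs‖ ^ 2 / 2))
      ((-α * Real.exp (-α * ‖x - xs‖ ^ 2 / 2)) • innerSL ℝ (x - xs)) x := by
  have h0 : HasFDerivAt (fun y : EuclideanSpace ℝ (Fin d) => y - xs)
      (ContinuousLinearMap.id ℝ _) x := (hasFDerivAt_id x).sub_const xs
  have h1 := (h0.inner ℝ h0)
  have h2 := (h1.const_mul (-α/2)).exp
  have heq : (fun y : EuclideanSpace ℝ (Fin d) =>
      Real.exp (-α / 2 * (inner ℝ (y - xs) (y - xs) : ℝ)))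
      = fun y => Real.exp (-α * ‖y - xs‖ ^ 2 / 2) := by
    funext y; rw [real_inner_self_eq_norm_sq]; ring_nf
  rw [heq] at h2
  refine h2.congr_fderiv ?_
  ext v
  simp only [ContinuousLinearMap.smul_apply, innerSL_apply_apply, ContinuousLinearMap.coe_comp',
    Function.comp_apply, ContinuousLinearMap.coe_smul', Pi.smul_apply,
    ContinuousLinearMap.prod_apply, ContinuousLinearMap.coe_id', id_eq,
    fderivInnerCLM_apply, smul_eq_mul, real_inner_self_eq_norm_sq]
  rw [real_inner_comm]
  ring

lemma aux_w_deriv {d : ℕ} (α c : ℝ) (xs x : EuclideanSpace ℝ (Fin d)) :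
    HasFDerivAt (fun y : EuclideanSpace ℝ (Fin d) => Real.exp (-α * ‖y - xs‖ ^ 2 / 2) - c)
      ((-α * Real.exp (-α * ‖x - xs‖ ^ 2 / 2)) • innerSL ℝ (x - xs)) x :=
  (aux_exp_deriv α xs x).sub_const c

set_option maxHeartbeats 1000000 in
/-- **Barrier lemma** for the strong maximum principle: with
`w_α(x) = exp(−α‖x − x*‖²/2) − exp(−α r²/2)`, there is an `α₀ > 0` such that for all
`α ≥ α₀`, `𝒜 w_α > 0` on the annulus `r/2 ≤ ‖x − x*‖ ≤ R`. -/
theorem barrier_lemma {d : ℕ} (hd : 1 ≤ d)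
    (b : EuclideanSpace ℝ (Fin d) → EuclideanSpace ℝ (Fin d))
    (k : EuclideanSpace ℝ (Fin d) → ℝ) (hk0 : ∀ x, 0 ≤ k x)
    (xs : EuclideanSpace ℝ (Fin d)) (r R : ℝ) (hr : 0 < r) (hrR : r ≤ R)
    (C : ℝ) (hC : 0 ≤ C)
    (hbound : ∀ x, ‖x - xs‖ ≤ R → ‖b x‖ + k x ≤ C) :
    ∃ α₀ > (0:ℝ), ∀ α ≥ α₀, ∀ x : EuclideanSpace ℝ (Fin d),
      r / 2 ≤ ‖x - xs‖ → ‖x - xs‖ ≤ R →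
      0 < gen b k
        (fun y => Real.exp (-α * ‖y - xs‖ ^ 2 / 2) - Real.exp (-α * r ^ 2 / 2)) x := by
  refine ⟨max 1 ((4 * d + 8 * C * R + 8 * C + 8) / r ^ 2), lt_of_lt_of_le one_pos (le_max_left _ _), ?_⟩
  intro α hα x hx1 hx2
  have hα1 : (1:ℝ) ≤ α := le_trans (le_max_left _ _) hα
  have hα0 : (0:ℝ) < α := lt_of_lt_of_le one_pos hα1
  have hα2 : 4 * d + 8 * C * R + 8 * C + 8 ≤ α * r ^ 2 := by
    rw [← div_le_iff₀ (by positivity : (0:ℝ) < r ^ 2)]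
    exact le_trans (le_max_right _ _) hα
  set f : EuclideanSpace ℝ (Fin d) → ℝ :=
    fun y => Real.exp (-α * ‖y - xs‖ ^ 2 / 2) - Real.exp (-α * r ^ 2 / 2) with hf
  set Ex : ℝ := Real.exp (-α * ‖x - xs‖ ^ 2 / 2) with hEx
  have hExpos : 0 < Ex := Real.exp_pos _
  have her : 0 < Real.exp (-α * r ^ 2 / 2) := Real.exp_pos _
  -- first derivative
  have hfd : fderiv ℝ f = fun y =>
      (-α * Real.exp (-α * ‖y - xs‖ ^ 2 / 2)) • innerSL ℝ (y - xs) := by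
    funext y
    exact (aux_w_deriv α _ xs y).fderiv
  -- second derivative
  have h0 : HasFDerivAt (fun y : EuclideanSpace ℝ (Fin d) => y - xs)
      (ContinuousLinearMap.id ℝ _) x := (hasFDerivAt_id x).sub_const xs
  have hc : HasFDerivAt (fun y : EuclideanSpace ℝ (Fin d) =>
      -α * Real.exp (-α * ‖y - xs‖ ^ 2 / 2))
      ((-α) • ((-α * Ex) • innerSL ℝ (x - xs))) x :=
    (aux_exp_deriv α xs x).const_mul (-α)
  have hg : HasFDerivAt (fun y : EuclideanSpace ℝ (Fin d) => innerSL ℝ (y - xs))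
      ((innerSL ℝ).comp (ContinuousLinearMap.id ℝ _)) x :=
    ((innerSL ℝ).hasFDerivAt).comp x h0
  have hD := hc.smul hg

  -- compute the Laplacian
  set q : ℝ := ‖x - xs‖ with hq
  have hnorm : ∑ i, ((x - xs) i * (x - xs) i) = q ^ 2 := by
    rw [hq, ← real_inner_self_eq_norm_sq, PiLp.inner_apply]
    simp [RCLike.inner_apply, sq]
  have hlap : lap f x = (d : ℝ) * (-α * Ex) + α ^ 2 * Ex * q ^ 2 := by
    unfold lap
    rw [hfd]; erw [hD.fderiv]
    simp only [ContinuousLinearMap.add_apply, ContinuousLinearMap.smul_apply,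
      ContinuousLinearMap.coe_comp', Function.comp_apply, ContinuousLinearMap.coe_id', id_eq,
      ContinuousLinearMap.smulRight_apply, innerSL_apply_apply, smul_eq_mul,
      EuclideanSpace.inner_single_right, EuclideanSpace.inner_single_left, map_one, one_mul,
      EuclideanSpace.single_apply, if_pos rfl, starRingEnd_apply, star_trivial]
    simp only [if_true, mul_one]
    rw [← hEx, Finset.sum_add_distrib, Finset.sum_const, Finset.card_univ, Fintype.card_fin,
      nsmul_eq_mul]
    have hs : ∑ i, -α * (-α * Ex * (x - xs) i) * (x - xs) i
        = α ^ 2 * Ex * ∑ i, ((x - xs) i * (x - xs) i) := by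
      rw [Finset.mul_sum]; exact Finset.sum_congr rfl fun i _ => by ring
    rw [hs, hnorm]
  -- the gradient term
  have hgrad : (inner ℝ (b x) (gradient f x) : ℝ)
      = (-α * Ex) * (inner ℝ (x - xs) (b x) : ℝ) := by
    rw [real_inner_comm]
    unfold gradient
    rw [InnerProductSpace.toDual_symm_apply, hfd]
    simp only [ContinuousLinearMap.smul_apply, innerSL_apply_apply, smul_eq_mul, ← hEx, ← hq]
  -- expand gen
  have hgen : gen b k f x = (1 / 2) * ((d : ℝ) * (-α * Ex) + α ^ 2 * Ex * q ^ 2)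
      + (-α * Ex) * (inner ℝ (x - xs) (b x) : ℝ)
      - k x * (Ex - Real.exp (-α * r ^ 2 / 2)) := by
    rw [gen, hlap, hgrad, hf]
  rw [hgen]
  set er : ℝ := Real.exp (-α * r ^ 2 / 2) with her'
  clear hD hfd hc hg h0 hnorm hlap hgrad hgen
  clear_value f Ex q er
  -- bounds
  have hb : ‖b x‖ ≤ C := by
    have := hbound x (hq ▸ hx2)
    have := hk0 x
    linarith
  have hk : k x ≤ C := by
    have := hbound x (hq ▸ hx2)
    have := norm_nonneg (b x)
    linarith
  have hip : (inner ℝ (x - xs) (b x) : ℝ) ≤ R * C := by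
    calc (inner ℝ (x - xs) (b x) : ℝ) ≤ ‖x - xs‖ * ‖b x‖ := real_inner_le_norm _ _
    _ ≤ R * C := by
        apply mul_le_mul (hq ▸ hx2) hb (norm_nonneg _)
        linarith
  have t1 : (-α * Ex) * (inner ℝ (x - xs) (b x) : ℝ) ≥ -(α * Ex * (R * C)) := by
    have := mul_le_mul_of_nonneg_left hip (by positivity : (0:ℝ) ≤ α * Ex)
    nlinarith
  have t2 : k x * (Ex - er) ≤ C * Ex := by
    nlinarith [mul_nonneg (hk0 x) her.le, mul_le_mul_of_nonneg_right hk hExpos.le]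
  -- the quadratic lower bound
  have hq0 : r / 2 ≤ q := hq ▸ hx1
  have hqq : (r / 2) ^ 2 ≤ q ^ 2 := by nlinarith
  have h3 : α * (4 * d + 8 * C * R + 8 * C + 8) ≤ α ^ 2 * r ^ 2 := by
    nlinarith [mul_le_mul_of_nonneg_left hα2 hα0.le]
  have hbr : α * (d : ℝ) / 2 + α * R * C + C + 1 ≤ α ^ 2 * q ^ 2 / 2 := by
    have h4 : α ^ 2 * (r / 2) ^ 2 ≤ α ^ 2 * q ^ 2 :=
      mul_le_mul_of_nonneg_left hqq (sq_nonneg α)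
    have hCC : C ≤ α * C := le_mul_of_one_le_left hC hα1
    linarith
  have hfin : 0 < Ex * (α ^ 2 * q ^ 2 / 2 - α * (d : ℝ) / 2 - α * R * C - C) :=
    mul_pos hExpos (by linarith)
  linarith [hfin, t1, t2]
end
end

section
/- Let b : ℝ^d → ℝ^d be continuously differentiable, let k : ℝ^d → [0,∞) be continuous, let f : ℝ̂^d → ℝ be such that its restriction to ℝ^d is twice continuously differentiable, and let g : ℝ̂^d → ℝ be such that its restriction to ℝ^d is twice continuously differentiable with compact support. Define 𝒦̂⁰f : ℝ̂^d → ℝ by 𝒦̂⁰f(x) = ⟨b(x), ∇f(x)⟩ + (1/2)Δf(x) − k(x)(f(x) − f(∞)) for x ∈ ℝ^d and 𝒦̂⁰f(∞) = 0, and define 𝒦̂^{0,⋆}g : ℝ̂^d → ℝ by 𝒦̂^{0,⋆}g(x) = −div(b·g)(x) + (1/2)Δg(x) − k(x)g(x) for x ∈ ℝ^d and 𝒦̂^{0,⋆}g(∞) = ∫_{ℝ^d} k(x)g(x) dx. Then ⟨g, 𝒦̂⁰f⟩ = ⟨𝒦̂^{0,⋆}g, f⟩, where ⟨g, f⟩ :=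 ∫_{ℝ^d} f(x)g(x) dx + f(∞)g(∞); explicitly, ∫_{ℝ^d} g(x)·(⟨b(x), ∇f(x)⟩ + (1/2)Δf(x) − k(x)(f(x) − f(∞))) dx = ∫_{ℝ^d} (−div(b·g)(x) + (1/2)Δg(x) − k(x)g(x))·f(x) dx + (∫_{ℝ^d} k(x)g(x) dx)·f(∞). -/
open MeasureTheory OnePoint

noncomputable section

/-- Divergence of a vector field `v : ℝ^d → ℝ^d` at `x`. -/
def divg {d : ℕ} (v : EuclideanSpace ℝ (Fin d) → EuclideanSpace ℝ (Fin d))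
    (x : EuclideanSpace ℝ (Fin d)) : ℝ :=
  ∑ i, fderiv ℝ v x (EuclideanSpace.single i 1) i

/-- The restriction of a function on `ℝ̂^d = ℝ^d ∪ {∞}` to `ℝ^d`. -/
def restr {d : ℕ} (f : OnePoint (EuclideanSpace ℝ (Fin d)) → ℝ) :
    EuclideanSpace ℝ (Fin d) → ℝ :=
  fun x => f x

section aux
variable {d : ℕ}

lemma my_integrable {h : EuclideanSpace ℝ (Fin d) → ℝ} (hc : Continuous h)
    (hs : HasCompactSupport h) : Integrable h := hc.integrable_of_hasCompactSupport hs

lemma my_ibp {u w : EuclideanSpace ℝ (Fin d) → ℝ} (v : EuclideanSpace ℝ (Fin d))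
    (hu : ContDiff ℝ 1 u) (hw : ContDiff ℝ 1 w) (hsupp : HasCompactSupport u) :
    ∫ x, u x * fderiv ℝ w x v = - ∫ x, fderiv ℝ u x v * w x := by
  have hu' : Continuous (fun x => fderiv ℝ u x v) :=
    (hu.continuous_fderiv one_ne_zero).clm_apply continuous_const
  have hw' : Continuous (fun x => fderiv ℝ w x v) :=
    (hw.continuous_fderiv one_ne_zero).clm_apply continuous_const
  have hsupp' : HasCompactSupport (fun x => fderiv ℝ u x v) :=
    (hsupp.fderiv ℝ).comp_left (g := fun L : _ →L[ℝ] ℝ => L v) rfl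
  apply integral_mul_fderiv_eq_neg_fderiv_mul_of_integrable
  · exact my_integrable (hu'.mul hw.continuous) (hsupp'.mul_right)
  · exact my_integrable (hu.continuous.mul hw') (hsupp.mul_right)
  · exact my_integrable (hu.continuous.mul hw.continuous) (hsupp.mul_right)
  · exact fun x _ => hu.differentiable one_ne_zero x
  · exact fun x _ => hw.differentiable one_ne_zero x

lemma my_coordD {V : EuclideanSpace ℝ (Fin d) → EuclideanSpace ℝ (Fin d)}
    (hV : Differentiable ℝ V) (x v : EuclideanSpace ℝ (Fin d)) (i : Fin d) :
    fderiv ℝ V x v i = fderiv ℝ (fun y => V y i) x v := by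
  have h : HasFDerivAt (fun y => V y i)
      ((EuclideanSpace.proj i).comp (fderiv ℝ V x)) x :=
    (EuclideanSpace.proj (𝕜 := ℝ) i).hasFDerivAt.comp x (hV x).hasFDerivAt
  rw [h.fderiv]; rfl

lemma my_secondD {F : EuclideanSpace ℝ (Fin d) → ℝ} (hF : ContDiff ℝ 2 F)
    (x v w : EuclideanSpace ℝ (Fin d)) :
    fderiv ℝ (fderiv ℝ F) x w v = fderiv ℝ (fun y => fderiv ℝ F y v) x w := by
  rw [fderiv_clm_apply ((hF.fderiv_right (m := 1) (by norm_num)).differentiable one_ne_zero x)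
    (differentiableAt_const v)]
  simp

lemma my_inner_grad {F : EuclideanSpace ℝ (Fin d) → ℝ} (x bx : EuclideanSpace ℝ (Fin d)) :
    (inner ℝ bx (gradient F x) : ℝ) = ∑ i, bx i * fderiv ℝ F x (EuclideanSpace.single i 1) := by
  rw [real_inner_comm]
  have h1 : (inner ℝ (gradient F x) bx : ℝ) = fderiv ℝ F x bx := by
    simp [gradient, InnerProductSpace.toDual_symm_apply]
  rw [h1]
  conv_lhs => rw [← (EuclideanSpace.basisFun (Fin d) ℝ).sum_repr bx]
  rw [map_sum]
  congr 1; ext i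
  rw [_root_.map_smul]
  simp [EuclideanSpace.basisFun_apply, EuclideanSpace.basisFun_repr, smul_eq_mul]

end aux


/-- **Duality of the generator with killing and its adjoint** on the extended space
`ℝ̂^d`: `⟨g, 𝒦̂⁰f⟩ = ⟨𝒦̂^{0,⋆}g, f⟩` for the inner product
`⟨g, f⟩ = ∫ f g dx + f(∞) g(∞)`, stated explicitly. -/
theorem generator_duality {d : ℕ}
    (b : EuclideanSpace ℝ (Fin d) → EuclideanSpace ℝ (Fin d))
    (hb : ContDiff ℝ 1 b)
    (k : EuclideanSpace ℝ (Fin d) → ℝ) (hk : Continuous k) (hk0 : ∀ x, 0 ≤ k x)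
    (f g : OnePoint (EuclideanSpace ℝ (Fin d)) → ℝ)
    (hf : ContDiff ℝ 2 (restr f))
    (hg : ContDiff ℝ 2 (restr g)) (hgsupp : HasCompactSupport (restr g)) :
    ∫ x : EuclideanSpace ℝ (Fin d),
        restr g x * ((inner ℝ (b x) (gradient (restr f) x) : ℝ) + (1 / 2) * lap (restr f) x
          - k x * (restr f x - f ∞)) =
      (∫ x : EuclideanSpace ℝ (Fin d),
          (-divg (fun y => restr g y • b y) x
            + (1 / 2) * lap (restr g) x - k x * restr g x) * restr f x)
        + (∫ x : EuclideanSpace ℝ (Fin d), k x * restr g x) * f ∞ := by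
  set F := restr f with hFdef
  set G := restr g with hGdef
  set c : ℝ := f ∞ with hcdef
  have hF1 : ContDiff ℝ 1 F := hf.of_le one_le_two
  have hG1 : ContDiff ℝ 1 G := hg.of_le one_le_two
  have hFc : Continuous F := hF1.continuous
  have hGc : Continuous G := hG1.continuous
  have hbi : ∀ i, ContDiff ℝ 1 (fun y => b y i) := fun i =>
    (EuclideanSpace.proj (𝕜 := ℝ) i).contDiff.comp hb
  have hGbi : ∀ i, ContDiff ℝ 1 (fun y => G y * b y i) := fun i => hG1.mul (hbi i)
  have hsuppGbi : ∀ i : Fin d, HasCompactSupport (fun y => G y * b y i) := fun i =>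
    hgsupp.mul_right
  have hDF : ∀ v, ContDiff ℝ 1 (fun x => fderiv ℝ F x v) := fun v =>
    (hf.fderiv_right (by norm_num)).clm_apply contDiff_const
  have hDG : ∀ v, ContDiff ℝ 1 (fun x => fderiv ℝ G x v) := fun v =>
    (hg.fderiv_right (by norm_num)).clm_apply contDiff_const
  have hDGsupp : ∀ v, HasCompactSupport (fun x => fderiv ℝ G x v) := fun v =>
    (hgsupp.fderiv ℝ).comp_left (g := fun L : _ →L[ℝ] ℝ => L v) rfl
  have cDF : ∀ v, Continuous (fun x => fderiv ℝ F x v) := fun v => (hDF v).continuous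
  have cDDF : ∀ i : Fin d, Continuous (fun x =>
      fderiv ℝ (fun y => fderiv ℝ F y (EuclideanSpace.single i 1)) x
        (EuclideanSpace.single i 1)) :=
    fun i => ((hDF _).continuous_fderiv one_ne_zero).clm_apply continuous_const
  have cDDG : ∀ i : Fin d, Continuous (fun x =>
      fderiv ℝ (fun y => fderiv ℝ G y (EuclideanSpace.single i 1)) x
        (EuclideanSpace.single i 1)) :=
    fun i => ((hDG _).continuous_fderiv one_ne_zero).clm_apply continuous_const
  have cDGb : ∀ i : Fin d, Continuous (fun x =>
      fderiv ℝ (fun y => G y * b y i) x (EuclideanSpace.single i 1)) :=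
    fun i => ((hGbi i).continuous_fderiv one_ne_zero).clm_apply continuous_const
  have sDGb : ∀ i : Fin d, HasCompactSupport (fun x =>
      fderiv ℝ (fun y => G y * b y i) x (EuclideanSpace.single i 1)) :=
    fun i => ((hsuppGbi i).fderiv ℝ).comp_left
      (g := fun L : _ →L[ℝ] ℝ => L (EuclideanSpace.single i 1)) rfl
  have sDDG : ∀ i : Fin d, HasCompactSupport (fun x =>
      fderiv ℝ (fun y => fderiv ℝ G y (EuclideanSpace.single i 1)) x
        (EuclideanSpace.single i 1)) :=
    fun i => ((hDGsupp _).fderiv ℝ).comp_left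
      (g := fun L : _ →L[ℝ] ℝ => L (EuclideanSpace.single i 1)) rfl
  -- integrability of the individual pieces
  have Ia : ∀ i : Fin d, Integrable (fun x =>
      G x * b x i * fderiv ℝ F x (EuclideanSpace.single i 1)) := fun i =>
    my_integrable ((hGc.mul (hbi i).continuous).mul (cDF _)) (hgsupp.mul_right.mul_right)
  have Ib : ∀ i : Fin d, Integrable (fun x =>
      G x * fderiv ℝ (fun y => fderiv ℝ F y (EuclideanSpace.single i 1)) x
        (EuclideanSpace.single i 1)) := fun i =>
    my_integrable (hGc.mul (cDDF i)) hgsupp.mul_right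
  have Ic : Integrable (fun x => k x * G x * F x) :=
    my_integrable ((hk.mul hGc).mul hFc) (hgsupp.mul_left.mul_right)
  have Ig : Integrable (fun x => k x * G x) := my_integrable (hk.mul hGc) hgsupp.mul_left
  have Id : Integrable (fun x => k x * G x * c) := Ig.mul_const c
  have Ie : ∀ i : Fin d, Integrable (fun x =>
      -(fderiv ℝ (fun y => G y * b y i) x (EuclideanSpace.single i 1) * F x)) :=
    fun i => (my_integrable ((cDGb i).mul hFc) ((sDGb i).mul_right)).neg
  have If' : ∀ i : Fin d, Integrable (fun x =>
      fderiv ℝ (fun y => fderiv ℝ G y (EuclideanSpace.single i 1)) x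
        (EuclideanSpace.single i 1) * F x) := fun i =>
    my_integrable ((cDDG i).mul hFc) ((sDDG i).mul_right)
  have ILa : Integrable (fun x => ∑ i : Fin d,
      G x * b x i * fderiv ℝ F x (EuclideanSpace.single i 1)) :=
    integrable_finset_sum _ fun i _ => Ia i
  have ILb : Integrable (fun x => (1 / 2 : ℝ) * ∑ i : Fin d,
      G x * fderiv ℝ (fun y => fderiv ℝ F y (EuclideanSpace.single i 1)) x
        (EuclideanSpace.single i 1)) :=
    (integrable_finset_sum _ fun i _ => Ib i).const_mul _
  have ILab : Integrable (fun x => (∑ i : Fin d,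
      G x * b x i * fderiv ℝ F x (EuclideanSpace.single i 1))
      + (1 / 2 : ℝ) * ∑ i : Fin d,
        G x * fderiv ℝ (fun y => fderiv ℝ F y (EuclideanSpace.single i 1)) x
          (EuclideanSpace.single i 1)) := ILa.add ILb
  have ILc : Integrable (fun x => k x * G x * F x - k x * G x * c) := Ic.sub Id
  have IRa : Integrable (fun x => ∑ i : Fin d,
      -(fderiv ℝ (fun y => G y * b y i) x (EuclideanSpace.single i 1) * F x)) :=
    integrable_finset_sum _ fun i _ => Ie i
  have IRb : Integrable (fun x => (1 / 2 : ℝ) * ∑ i : Fin d,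
      fderiv ℝ (fun y => fderiv ℝ G y (EuclideanSpace.single i 1)) x
        (EuclideanSpace.single i 1) * F x) :=
    (integrable_finset_sum _ fun i _ => If' i).const_mul _
  have IRab : Integrable (fun x => (∑ i : Fin d,
      -(fderiv ℝ (fun y => G y * b y i) x (EuclideanSpace.single i 1) * F x))
      + (1 / 2 : ℝ) * ∑ i : Fin d,
        fderiv ℝ (fun y => fderiv ℝ G y (EuclideanSpace.single i 1)) x
          (EuclideanSpace.single i 1) * F x) := IRa.add IRb
  -- pointwise rewriting
  have hlapF : ∀ x, lap F x = ∑ i : Fin d,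
      fderiv ℝ (fun y => fderiv ℝ F y (EuclideanSpace.single i 1)) x
        (EuclideanSpace.single i 1) :=
    fun x => Finset.sum_congr rfl fun i _ => my_secondD hf x _ _
  have hlapG : ∀ x, lap G x = ∑ i : Fin d,
      fderiv ℝ (fun y => fderiv ℝ G y (EuclideanSpace.single i 1)) x
        (EuclideanSpace.single i 1) :=
    fun x => Finset.sum_congr rfl fun i _ => my_secondD hg x _ _
  have hdiv : ∀ x, divg (fun y => G y • b y) x
      = ∑ i : Fin d, fderiv ℝ (fun y => G y * b y i) x (EuclideanSpace.single i 1) := by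
    intro x
    refine Finset.sum_congr rfl fun i _ => ?_
    have hVdiff : Differentiable ℝ (fun y => G y • b y) :=
      (hG1.differentiable one_ne_zero).smul (hb.differentiable one_ne_zero)
    exact my_coordD hVdiff x (EuclideanSpace.single i 1) i
  have hL : (fun x => G x * ((inner ℝ (b x) (gradient F x) : ℝ) + (1 / 2) * lap F x
        - k x * (F x - c)))
      = fun x => ((∑ i : Fin d, G x * b x i * fderiv ℝ F x (EuclideanSpace.single i 1))
          + (1 / 2) * ∑ i : Fin d,
            G x * fderiv ℝ (fun y => fderiv ℝ F y (EuclideanSpace.single i 1)) x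
              (EuclideanSpace.single i 1))
        - (k x * G x * F x - k x * G x * c) := by
    funext x
    have e1 : ∑ i : Fin d, G x * b x i * fderiv ℝ F x (EuclideanSpace.single i 1)
        = G x * ∑ i : Fin d, b x i * fderiv ℝ F x (EuclideanSpace.single i 1) := by
      rw [Finset.mul_sum]; exact Finset.sum_congr rfl fun i _ => mul_assoc _ _ _
    have e2 : ∑ i : Fin d, G x * fderiv ℝ
          (fun y => fderiv ℝ F y (EuclideanSpace.single i 1)) x (EuclideanSpace.single i 1)
        = G x * ∑ i : Fin d, fderiv ℝ
          (fun y => fderiv ℝ F y (EuclideanSpace.single i 1)) x (EuclideanSpace.single i 1) :=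
      (Finset.mul_sum _ _ _).symm
    rw [my_inner_grad x (b x), hlapF x, e1, e2]
    ring
  have hR : (fun x => (-divg (fun y => G y • b y) x + (1 / 2) * lap G x - k x * G x) * F x)
      = fun x => ((∑ i : Fin d,
          -(fderiv ℝ (fun y => G y * b y i) x (EuclideanSpace.single i 1) * F x))
          + (1 / 2) * ∑ i : Fin d,
            fderiv ℝ (fun y => fderiv ℝ G y (EuclideanSpace.single i 1)) x
              (EuclideanSpace.single i 1) * F x)
        - k x * G x * F x := by
    funext x
    have e3 : ∑ i : Fin d,
        -(fderiv ℝ (fun y => G y * b y i) x (EuclideanSpace.single i 1) * F x)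
        = -((∑ i : Fin d, fderiv ℝ (fun y => G y * b y i) x (EuclideanSpace.single i 1))
            * F x) := by
      rw [Finset.sum_mul, ← Finset.sum_neg_distrib]
    have e4 : ∑ i : Fin d,
        fderiv ℝ (fun y => fderiv ℝ G y (EuclideanSpace.single i 1)) x
          (EuclideanSpace.single i 1) * F x
        = (∑ i : Fin d, fderiv ℝ (fun y => fderiv ℝ G y (EuclideanSpace.single i 1)) x
            (EuclideanSpace.single i 1)) * F x := (Finset.sum_mul _ _ _).symm
    rw [hdiv x, hlapG x, e3, e4]
    ring
  rw [hL, hR]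
  rw [integral_sub ILab ILc, integral_add ILa ILb, integral_sub Ic Id,
    integral_sub IRab Ic, integral_add IRa IRb,
    integral_const_mul, integral_const_mul,
    integral_finset_sum _ (fun i _ => Ia i), integral_finset_sum _ (fun i _ => Ib i),
    integral_finset_sum _ (fun i _ => Ie i), integral_finset_sum _ (fun i _ => If' i)]
  have key1 : ∀ i : Fin d,
      (∫ x, G x * b x i * fderiv ℝ F x (EuclideanSpace.single i 1))
      = ∫ x, -(fderiv ℝ (fun y => G y * b y i) x (EuclideanSpace.single i 1) * F x) := by
    intro i
    have h1 : (∫ x, G x * b x i * fderiv ℝ F x (EuclideanSpace.single i 1))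
        = - ∫ x, fderiv ℝ (fun y => G y * b y i) x (EuclideanSpace.single i 1) * F x :=
      my_ibp _ (hGbi i) hF1 (hsuppGbi i)
    rw [h1, integral_neg]
  have key2 : ∀ i : Fin d,
      (∫ x, G x * fderiv ℝ (fun y => fderiv ℝ F y (EuclideanSpace.single i 1)) x
          (EuclideanSpace.single i 1))
      = ∫ x, fderiv ℝ (fun y => fderiv ℝ G y (EuclideanSpace.single i 1)) x
          (EuclideanSpace.single i 1) * F x := by
    intro i
    have step1 : (∫ x, G x * fderiv ℝ (fun y => fderiv ℝ F y (EuclideanSpace.single i 1)) x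
          (EuclideanSpace.single i 1))
        = - ∫ x, fderiv ℝ G x (EuclideanSpace.single i 1)
            * fderiv ℝ F x (EuclideanSpace.single i 1) :=
      my_ibp _ hG1 (hDF _) hgsupp
    have step2 : (∫ x, fderiv ℝ G x (EuclideanSpace.single i 1)
          * fderiv ℝ F x (EuclideanSpace.single i 1))
        = - ∫ x, fderiv ℝ (fun y => fderiv ℝ G y (EuclideanSpace.single i 1)) x
            (EuclideanSpace.single i 1) * F x :=
      my_ibp _ (hDG _) hF1 (hDGsupp _)
    rw [step1, step2, neg_neg]
  have hc1 : (∫ x, k x * G x * c) = (∫ x, k x * G x) * c := integral_mul_const c _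
  rw [Finset.sum_congr rfl (fun i _ => key1 i), Finset.sum_congr rfl (fun i _ => key2 i), hc1]
  ring
end
end

section
/- Let T > 0, let b : ℝ^d → ℝ^d be continuously differentiable, let k : ℝ^d → ℝ, and let p : [0,T] × ℝ^d → (0,∞) be C¹ in t and C² in x, satisfying the Fokker–Planck equation with killing: ∂_t p_t(x) = −div(b·p_t)(x) + (1/2)Δp_t(x) − k(x)p_t(x) for all (t,x) ∈ [0,T] × ℝ^d. Then the time-reversed density q_t := p_{T−t} satisfies ∂_t q_t(x) = −div( (−b + ∇ log q_t)·q_t )(x) + (1/2)Δ q_t(x) + k(x) q_t(x) for all (t,x) ∈ [0,T] × ℝ^d. -/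
open Set InnerProductSpace

noncomputable section

variable {d : ℕ}

local notation "E" => EuclideanSpace ℝ (Fin d)

lemma toDual_symm_coord (w : StrongDual ℝ (EuclideanSpace ℝ (Fin d))) (i : Fin d) :
    (toDual ℝ (EuclideanSpace ℝ (Fin d))).symm w i = w (EuclideanSpace.single i 1) := by
  have h1 : ((toDual ℝ (EuclideanSpace ℝ (Fin d))).symm w) i
      = ⟪(toDual ℝ (EuclideanSpace ℝ (Fin d))).symm w, EuclideanSpace.single i (1:ℝ)⟫_ℝ := by
    rw [EuclideanSpace.inner_single_right]; simp
  rw [h1, toDual_symm_apply]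

lemma grad_log_smul (f : E → ℝ) (hf : ContDiff ℝ 2 f) (hpos : ∀ x, 0 < f x) (y : E) :
    f y • gradient (fun z => Real.log (f z)) y = gradient f y := by
  have hd : HasFDerivAt f (fderiv ℝ f y) y :=
    (hf.differentiable two_ne_zero y).hasFDerivAt
  have hlog := hd.log (hpos y).ne'
  rw [show gradient (fun z => Real.log (f z)) y
      = (toDual ℝ (EuclideanSpace ℝ (Fin d))).symm (fderiv ℝ (fun z => Real.log (f z)) y) from rfl,
    hlog.fderiv, map_smul]
  show f y • ((f y)⁻¹ • gradient f y) = gradient f y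
  rw [smul_inv_smul₀ (hpos y).ne']

lemma fderiv_gradient (f : E → ℝ) (hf : ContDiff ℝ 2 f) (x : E) (v : E) :
    fderiv ℝ (gradient f) x v
      = (toDual ℝ (EuclideanSpace ℝ (Fin d))).symm (fderiv ℝ (fderiv ℝ f) x v) := by
  have hg : DifferentiableAt ℝ (fderiv ℝ f) x :=
    ((hf.fderiv_right (m := 1) (by norm_num)).differentiable one_ne_zero).differentiableAt
  set L : StrongDual ℝ (EuclideanSpace ℝ (Fin d)) →L[ℝ] EuclideanSpace ℝ (Fin d) :=
    (toDual ℝ (EuclideanSpace ℝ (Fin d))).symm.toContinuousLinearEquiv.toContinuousLinearMap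
    with hLdef
  have hL : HasFDerivAt (fun w : StrongDual ℝ (EuclideanSpace ℝ (Fin d)) =>
      (toDual ℝ (EuclideanSpace ℝ (Fin d))).symm w) L (fderiv ℝ f x) := L.hasFDerivAt
  have hcomp := (hL.comp x hg.hasFDerivAt).fderiv
  have : gradient f = (fun w => (toDual ℝ (EuclideanSpace ℝ (Fin d))).symm w) ∘ fderiv ℝ f := rfl
  rw [this, hcomp]
  rfl

lemma gradient_differentiableAt (f : E → ℝ) (hf : ContDiff ℝ 2 f) (x : E) :
    DifferentiableAt ℝ (gradient f) x := by
  have hg : DifferentiableAt ℝ (fderiv ℝ f) x :=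
    ((hf.fderiv_right (m := 1) (by norm_num)).differentiable one_ne_zero).differentiableAt
  have hL : DifferentiableAt ℝ (fun w : StrongDual ℝ (EuclideanSpace ℝ (Fin d)) =>
      (toDual ℝ (EuclideanSpace ℝ (Fin d))).symm w) (fderiv ℝ f x) :=
    ((toDual ℝ (EuclideanSpace ℝ (Fin d))).symm.toContinuousLinearEquiv.toContinuousLinearMap :
      StrongDual ℝ (EuclideanSpace ℝ (Fin d)) →L[ℝ] EuclideanSpace ℝ (Fin d)).differentiableAt
  exact hL.comp x hg

lemma divg_gradient (f : E → ℝ) (hf : ContDiff ℝ 2 f) (x : E) :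
    divg (gradient f) x = lap f x := by
  unfold divg lap
  exact Finset.sum_congr rfl fun i _ => by
    rw [fderiv_gradient f hf x, toDual_symm_coord]

lemma divg_add (g h : E → E) (x : E) (hg : DifferentiableAt ℝ g x)
    (hh : DifferentiableAt ℝ h x) :
    divg (fun y => g y + h y) x = divg g x + divg h x := by
  unfold divg
  rw [← Finset.sum_add_distrib]
  exact Finset.sum_congr rfl fun i _ => by rw [fderiv_fun_add hg hh]; simp

lemma divg_neg (g : E → E) (x : E) :
    divg (fun y => -g y) x = -divg g x := by
  unfold divg
  rw [← Finset.sum_neg_distrib]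
  exact Finset.sum_congr rfl fun i _ => by rw [fderiv_fun_neg]; simp

/-- **Time reversal of the Fokker–Planck equation with killing**: if a positive density `p`
satisfies `∂ₜpₜ = −div(b pₜ) + ½Δpₜ − k pₜ` on `[0,T] × ℝ^d`, then `qₜ := p_{T−t}` satisfies
`∂ₜqₜ = −div((−b + ∇log qₜ) qₜ) + ½Δqₜ + k qₜ`. -/
theorem fokker_planck_time_reversal {d : ℕ} (T : ℝ) (hT : 0 < T)
    (b : EuclideanSpace ℝ (Fin d) → EuclideanSpace ℝ (Fin d)) (hb : ContDiff ℝ 1 b)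
    (k : EuclideanSpace ℝ (Fin d) → ℝ)
    (p : ℝ → EuclideanSpace ℝ (Fin d) → ℝ)
    (hpos : ∀ t ∈ Icc (0:ℝ) T, ∀ x, 0 < p t x)
    (hp2 : ∀ t ∈ Icc (0:ℝ) T, ContDiff ℝ 2 (p t))
    (hFP : ∀ t ∈ Icc (0:ℝ) T, ∀ x, HasDerivAt (fun s => p s x)
      (-divg (fun y => p t y • b y) x + (1 / 2) * lap (p t) x - k x * p t x) t) :
    ∀ t ∈ Icc (0:ℝ) T, ∀ x, HasDerivAt (fun s => p (T - s) x)
      (-divg (fun y =>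
          p (T - t) y • (-b y + gradient (fun z => Real.log (p (T - t) z)) y)) x
        + (1 / 2) * lap (p (T - t)) x + k x * p (T - t) x) t := by
  intro t ht x
  have hτ : T - t ∈ Icc (0:ℝ) T := ⟨by linarith [ht.2], by linarith [ht.1]⟩
  set f := p (T - t) with hfdef
  have hf : ContDiff ℝ 2 f := hp2 _ hτ
  have hfpos : ∀ y, 0 < f y := hpos _ hτ
  -- the vector field rewrites pointwise
  have hfun : (fun y => f y • (-b y + gradient (fun z => Real.log (f z)) y))
      = fun y => -(f y • b y) + gradient f y := funext fun y => by
    rw [smul_add, smul_neg, grad_log_smul f hf hfpos y]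
  have hsmul : DifferentiableAt ℝ (fun y => f y • b y) x :=
    ((hf.differentiable two_ne_zero) x).smul ((hb.differentiable one_ne_zero) x)
  have key : divg (fun y => f y • (-b y + gradient (fun z => Real.log (f z)) y)) x
      = -divg (fun y => f y • b y) x + lap f x := by
    rw [hfun,
      divg_add (fun y => -(f y • b y)) (gradient f) x hsmul.neg
        (gradient_differentiableAt f hf x),
      divg_neg (fun y => f y • b y) x, divg_gradient f hf]
  have hD := hFP (T - t) hτ x
  have hTt : HasDerivAt (fun s : ℝ => T - s) (-1) t := by
    simpa using (hasDerivAt_id t).const_sub T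
  have hcomp := HasDerivAt.comp t hD hTt
  refine HasDerivAt.congr_deriv hcomp ?_
  rw [key]
  ring
end
end

section
/- Let x ∈ ℝ^d, let b : ℝ^d → ℝ^d be continuous, let k : ℝ^d → [0,∞) be bounded and continuous, and let (X_t)_{t ≥ 0} be an ℝ^d-valued process with continuous sample paths and X_0 = x almost surely, such that for every twice continuously differentiable compactly supported g : ℝ^d → ℝ and every t ≥ 0, E[g(X_t)] = g(x) + E[ ∫₀^t ((1/2)Δg + ⟨b, ∇g⟩)(X_s) ds ]. Then for every twice continuously differentiable compactly supported f : ℝ^d → ℝ, lim_{t → 0⁺} (1/t) ( E[ f(X_t) · exp(−∫₀^t k(X_s) ds) ] − f(x) ) = (1/2)Δf(x) + ⟨b(x), ∇f(x)⟩ − k(x)f(x). -/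
open MeasureTheory Filter

noncomputable section

/-- One-sided difference quotient converges to the derivative. -/
lemma aux_slope {h : ℝ → ℝ} {c : ℝ} (hd : HasDerivAt h c 0) :
    Tendsto (fun t => (1 / t) * (h t - h 0)) (nhdsWithin 0 (Set.Ioi 0)) (nhds c) := by
  have h1 := hasDerivAt_iff_tendsto_slope.1 hd
  have h2 : Tendsto (slope h 0) (nhdsWithin 0 (Set.Ioi 0)) (nhds c) :=
    h1.mono_left (nhdsWithin_mono _ fun t (ht : t ∈ Set.Ioi 0) => ne_of_gt ht)
  refine h2.congr fun t => ?_
  rw [slope_def_field]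
  ring

/-- FTC: derivative of `u ↦ ∫₀ᵘ g` at `0` is `g 0` for continuous `g`. -/
lemma aux_ftc_deriv (g : ℝ → ℝ) (hg : Continuous g) :
    HasDerivAt (fun u => ∫ s in (0:ℝ)..u, g s) (g 0) 0 :=
  intervalIntegral.integral_hasDerivAt_right (hg.intervalIntegrable 0 0)
    (hg.stronglyMeasurableAtFilter _ _) hg.continuousAt

/-- **Generator of the Feynman–Kac semigroup**: if `(X_t)` is a diffusion with drift `b`
started at `x` (in the sense that the Dynkin formula holds for all C² compactly supported
test functions), then for every C² compactly supported `f`,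
`(1/t)(E[f(Xₜ) exp(−∫₀ᵗ k(Xₛ)ds)] − f(x)) → ½Δf(x) + ⟨b(x),∇f(x)⟩ − k(x)f(x)` as `t → 0⁺`. -/
theorem feynman_kac_generator {d : ℕ} {Ω : Type*} [MeasurableSpace Ω]
    (P : Measure Ω) [IsProbabilityMeasure P]
    (x : EuclideanSpace ℝ (Fin d))
    (b : EuclideanSpace ℝ (Fin d) → EuclideanSpace ℝ (Fin d)) (hb : Continuous b)
    (k : EuclideanSpace ℝ (Fin d) → ℝ) (hk : Continuous k) (hk0 : ∀ y, 0 ≤ k y)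
    (hkbdd : ∃ C, ∀ y, k y ≤ C)
    (X : ℝ → Ω → EuclideanSpace ℝ (Fin d))
    (hXmeas : ∀ t, Measurable (X t))
    (hXcont : ∀ ω, Continuous (fun s => X s ω))
    (hX0 : ∀ᵐ ω ∂P, X 0 ω = x)
    (hDynkin : ∀ g : EuclideanSpace ℝ (Fin d) → ℝ, ContDiff ℝ 2 g → HasCompactSupport g →
      ∀ t : ℝ, 0 ≤ t →
      ∫ ω, g (X t ω) ∂P =
        g x + ∫ ω, (∫ s in (0:ℝ)..t,
          (1 / 2) * lap g (X s ω) + (inner ℝ (b (X s ω)) (gradient g (X s ω)) : ℝ)) ∂P) :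
    ∀ f : EuclideanSpace ℝ (Fin d) → ℝ, ContDiff ℝ 2 f → HasCompactSupport f →
      Tendsto
        (fun t : ℝ => (1 / t) *
          ((∫ ω, f (X t ω) * Real.exp (-(∫ s in (0:ℝ)..t, k (X s ω))) ∂P) - f x))
        (nhdsWithin 0 (Set.Ioi 0))
        (nhds ((1 / 2) * lap f x + (inner ℝ (b x) (gradient f x) : ℝ) - k x * f x)) := by
  intro f hf hfc
  set A : EuclideanSpace ℝ (Fin d) → ℝ :=
    fun y => (1 / 2) * lap f y + (inner ℝ (b y) (gradient f y) : ℝ) with hAdef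
  -- continuity of A
  have hf2 : Continuous (fderiv ℝ (fderiv ℝ f)) :=
    (hf.fderiv_right (m := 1) (by norm_num)).continuous_fderiv one_ne_zero
  have hlapc : Continuous (lap f) := by
    unfold lap
    exact continuous_finset_sum _ fun i _ =>
      (hf2.clm_apply continuous_const).clm_apply continuous_const
  have hgradc : Continuous (gradient f) := by
    unfold gradient
    exact (LinearIsometryEquiv.continuous _).comp (hf.continuous_fderiv (by norm_num))
  have hAc : Continuous A := (continuous_const.mul hlapc).add (hb.inner hgradc)
  -- A vanishes outside tsupport f
  have hker : ∀ y, y ∉ tsupport f → A y = 0 := by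
    intro y hy
    have h1 : fderiv ℝ f y = 0 := by
      have : y ∉ Function.support (fderiv ℝ f) := fun h => hy (support_fderiv_subset ℝ h)
      simpa [Function.mem_support, not_not] using this
    have hy2 : y ∉ tsupport (fderiv ℝ f) := fun h =>
      hy (closure_minimal (support_fderiv_subset ℝ) (isClosed_tsupport f) h)
    have h2 : fderiv ℝ (fderiv ℝ f) y = 0 := by
      have : y ∉ Function.support (fderiv ℝ (fderiv ℝ f)) := fun h =>
        hy2 (support_fderiv_subset ℝ h)
      simpa [Function.mem_support, not_not] using this
    simp [hAdef, lap, gradient, h1, h2]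
  have hAcs : HasCompactSupport A := HasCompactSupport.intro hfc hker
  obtain ⟨CA, hCA⟩ := hAcs.exists_bound_of_continuous hAc
  have hCA0 : 0 ≤ CA := le_trans (norm_nonneg _) (hCA x)
  obtain ⟨Mf, hMf⟩ := hfc.exists_bound_of_continuous hf.continuous
  have hMf0 : 0 ≤ Mf := le_trans (norm_nonneg _) (hMf x)
  obtain ⟨Ck, hCk⟩ := hkbdd
  have hCk0 : 0 ≤ Ck := le_trans (hk0 x) (hCk x)
  -- measurability
  have hXj : Measurable (Function.uncurry X) :=
    measurable_uncurry_of_continuous_of_measurable hXcont hXmeas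
  have hsetm : ∀ (g : EuclideanSpace ℝ (Fin d) → ℝ), Continuous g → ∀ t : ℝ,
      Measurable fun ω => ∫ s in (0:ℝ)..t, g (X s ω) := by
    intro g hg t
    have base : ∀ s : Set ℝ, Measurable fun ω => ∫ u in s, g (X u ω) := fun s =>
      ((hg.measurable.comp (hXj.comp measurable_swap)).stronglyMeasurable.integral_prod_right').measurable
    simp only [intervalIntegral]
    exact (base _).sub (base _)
  have hKm : ∀ t, Measurable fun ω => ∫ s in (0:ℝ)..t, k (X s ω) := hsetm k hk
  have hAm : ∀ t, Measurable fun ω => ∫ s in (0:ℝ)..t, A (X s ω) := hsetm A hAc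
  -- bounds on K
  have hK0 : ∀ t, 0 ≤ t → ∀ ω, 0 ≤ ∫ s in (0:ℝ)..t, k (X s ω) := fun t ht ω =>
    intervalIntegral.integral_nonneg ht fun s _ => hk0 _
  have hKle : ∀ t, 0 < t → ∀ ω, (∫ s in (0:ℝ)..t, k (X s ω)) ≤ Ck * t := by
    intro t ht ω
    have h := intervalIntegral.norm_integral_le_of_norm_le_const
      (a := 0) (b := t) (C := Ck) (f := fun s => k (X s ω))
      (fun s _ => by rw [Real.norm_eq_abs, abs_of_nonneg (hk0 _)]; exact hCk _)
    have h2 := le_trans (le_abs_self _) h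
    simpa [abs_of_pos ht] using h2
  -- integrability
  have hIf : ∀ t, Integrable (fun ω => f (X t ω)) P := fun t =>
    (integrable_const Mf).mono'
      (hf.continuous.measurable.comp (hXmeas t)).aestronglyMeasurable
      (ae_of_all _ fun ω => hMf _)
  have hIfK : ∀ t, 0 ≤ t →
      Integrable (fun ω => f (X t ω) * Real.exp (-(∫ s in (0:ℝ)..t, k (X s ω)))) P := by
    intro t ht
    refine (integrable_const Mf).mono'
      (((hf.continuous.measurable.comp (hXmeas t))).mul
        (Real.measurable_exp.comp (hKm t).neg)).aestronglyMeasurable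
      (ae_of_all _ fun ω => ?_)
    have he1 : Real.exp (-(∫ s in (0:ℝ)..t, k (X s ω))) ≤ 1 :=
      Real.exp_le_one_iff.2 (neg_nonpos.2 (hK0 t ht ω))
    have he0 : 0 < Real.exp (-(∫ s in (0:ℝ)..t, k (X s ω))) := Real.exp_pos _
    rw [norm_mul]
    calc ‖f (X t ω)‖ * ‖Real.exp (-(∫ s in (0:ℝ)..t, k (X s ω)))‖
        ≤ Mf * 1 := by
          apply mul_le_mul (hMf _) _ (norm_nonneg _) hMf0
          rw [Real.norm_eq_abs, abs_of_pos he0]; exact he1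
      _ = Mf := mul_one Mf
  -- the two convergence pieces
  have h1 : Tendsto (fun t => ∫ ω, ((1 / t) * ∫ s in (0:ℝ)..t, A (X s ω)) ∂P)
      (nhdsWithin 0 (Set.Ioi 0)) (nhds (A x)) := by
    have hAx : A x = ∫ _ω, A x ∂P := by simp
    rw [hAx]
    apply tendsto_integral_filter_of_dominated_convergence (bound := fun _ => CA)
    · exact Eventually.of_forall fun t => ((hAm t).const_mul _).aestronglyMeasurable
    · filter_upwards [self_mem_nhdsWithin] with t ht
      refine ae_of_all _ fun ω => ?_
      have ht' : (0:ℝ) < t := ht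
      have hI : ‖∫ s in (0:ℝ)..t, A (X s ω)‖ ≤ CA * t := by
        have := intervalIntegral.norm_integral_le_of_norm_le_const
          (a := 0) (b := t) (C := CA) (f := fun s => A (X s ω)) (fun s _ => hCA _)
        simpa [abs_of_pos ht'] using this
      rw [norm_mul, Real.norm_eq_abs (1 / t), abs_of_pos (by positivity : (0:ℝ) < 1 / t)]
      calc (1 / t) * ‖∫ s in (0:ℝ)..t, A (X s ω)‖
          ≤ (1 / t) * (CA * t) := by
            exact mul_le_mul_of_nonneg_left hI (by positivity)
        _ = CA := by field_simp
    · exact integrable_const CA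
    · filter_upwards [hX0] with ω hω
      have hgc : Continuous fun s => A (X s ω) := hAc.comp (hXcont ω)
      have hd := aux_ftc_deriv (fun s => A (X s ω)) hgc
      have := aux_slope hd
      simp only [intervalIntegral.integral_same, sub_zero] at this
      simpa [hω] using this
  have h2 : Tendsto (fun t => ∫ ω, (1 / t) *
        (f (X t ω) * (Real.exp (-(∫ s in (0:ℝ)..t, k (X s ω))) - 1)) ∂P)
      (nhdsWithin 0 (Set.Ioi 0)) (nhds (f x * (-(k x)))) := by
    have hfx : f x * (-(k x)) = ∫ _ω, f x * (-(k x)) ∂P := by simp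
    rw [hfx]
    apply tendsto_integral_filter_of_dominated_convergence (bound := fun _ => Mf * Ck)
    · refine Eventually.of_forall fun t => Measurable.aestronglyMeasurable ?_
      exact (((hf.continuous.measurable.comp (hXmeas t)).mul
        ((Real.measurable_exp.comp (hKm t).neg).sub measurable_const)).const_mul _)
    · filter_upwards [self_mem_nhdsWithin] with t ht
      refine ae_of_all _ fun ω => ?_
      have ht' : (0:ℝ) < t := ht
      set K := ∫ s in (0:ℝ)..t, k (X s ω) with hKdef
      have hKnn : 0 ≤ K := hK0 t ht'.le ω
      have hKle' : K ≤ Ck * t := hKle t ht' ω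
      have he1 : Real.exp (-K) ≤ 1 := Real.exp_le_one_iff.2 (neg_nonpos.2 hKnn)
      have he2 : 1 - K ≤ Real.exp (-K) := by nlinarith [Real.add_one_le_exp (-K)]
      have habs : |Real.exp (-K) - 1| ≤ Ck * t := by
        rw [abs_sub_comm, abs_of_nonneg (sub_nonneg.2 he1)]
        linarith
      rw [norm_mul, norm_mul, Real.norm_eq_abs (1 / t),
        abs_of_pos (by positivity : (0:ℝ) < 1 / t)]
      calc (1 / t) * (‖f (X t ω)‖ * ‖Real.exp (-K) - 1‖)
          ≤ (1 / t) * (Mf * (Ck * t)) := by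
            apply mul_le_mul_of_nonneg_left _ (by positivity)
            apply mul_le_mul (hMf _) _ (norm_nonneg _) hMf0
            rw [Real.norm_eq_abs]; exact habs
        _ = Mf * Ck := by field_simp
    · exact integrable_const (Mf * Ck)
    · filter_upwards [hX0] with ω hω
      have hkc : Continuous fun s => k (X s ω) := hk.comp (hXcont ω)
      have hd : HasDerivAt (fun u => ∫ s in (0:ℝ)..u, k (X s ω)) (k x) 0 := by
        have := aux_ftc_deriv (fun s => k (X s ω)) hkc
        simpa [hω] using this
      have hde : HasDerivAt (fun u => Real.exp (-(∫ s in (0:ℝ)..u, k (X s ω)))) (-(k x)) 0 := by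
        have := (Real.hasDerivAt_exp (-(∫ s in (0:ℝ)..(0:ℝ), k (X s ω)))).comp 0 hd.neg
        simpa [Function.comp_def, Pi.neg_apply] using this
      have hslope := aux_slope hde
      simp only [intervalIntegral.integral_same, neg_zero, Real.exp_zero] at hslope
      have hfa : Tendsto (fun t => f (X t ω)) (nhdsWithin 0 (Set.Ioi 0)) (nhds (f x)) := by
        have := ((hf.continuous.comp (hXcont ω)).tendsto 0).mono_left
          (nhdsWithin_le_nhds (s := Set.Ioi (0:ℝ)))
        simpa [hω, Function.comp_def] using this
      have := hfa.mul hslope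
      refine this.congr fun t => ?_
      ring
  -- assemble
  have heq : ∀ᶠ t in nhdsWithin 0 (Set.Ioi 0),
      (∫ ω, ((1 / t) * ∫ s in (0:ℝ)..t, A (X s ω)) ∂P) +
        (∫ ω, (1 / t) *
          (f (X t ω) * (Real.exp (-(∫ s in (0:ℝ)..t, k (X s ω))) - 1)) ∂P) =
      (1 / t) *
        ((∫ ω, f (X t ω) * Real.exp (-(∫ s in (0:ℝ)..t, k (X s ω))) ∂P) - f x) := by
    filter_upwards [self_mem_nhdsWithin] with t ht
    have ht' : (0:ℝ) < t := ht
    have hD := hDynkin f hf hfc t ht'.le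
    have hsplit : (∫ ω, f (X t ω) *
          (Real.exp (-(∫ s in (0:ℝ)..t, k (X s ω))) - 1) ∂P)
        = (∫ ω, f (X t ω) * Real.exp (-(∫ s in (0:ℝ)..t, k (X s ω))) ∂P)
          - ∫ ω, f (X t ω) ∂P := by
      rw [← integral_sub (hIfK t ht'.le) (hIf t)]
      congr 1; funext ω; ring
    have hD' : ∫ ω, f (X t ω) ∂P
        = f x + ∫ ω, (∫ s in (0:ℝ)..t, A (X s ω)) ∂P := hD
    rw [integral_const_mul, integral_const_mul, hsplit]
    have hDyn' : (∫ ω, (∫ s in (0:ℝ)..t, A (X s ω)) ∂P)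
        = (∫ ω, f (X t ω) ∂P) - f x := by
      rw [hD']; ring
    rw [hDyn']
    ring
  have hlim := (h1.add h2).congr' heq
  have hval : (1 / 2) * lap f x + (inner ℝ (b x) (gradient f x) : ℝ) - k x * f x
      = A x + f x * (-(k x)) := by
    simp only [hAdef]; ring
  rw [hval]
  exact hlim
end
end
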